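/- Let h : ℝ² → ℝ be of class C² with h(x+1, x̄+1) = h(x, x̄) and h₁₂(x, x̄) < 0 for all (x, x̄) ∈ ℝ². Let φ : ℝ → ℝ be an increasing bi-Lipschitz homeomorphism with φ(x+1) = φ(x) + 1 satisfying h₂(φ⁻¹(x), x) + h₁(x, φ(x)) = 0 for all x ∈ ℝ. Define a(x) = h₂₂(φ⁻¹(x), x) + h₁₁(x, φ(x)) and b(x) = −h₁₂(φ⁻¹(x), x). Let B⁺, C⁺, B⁻, C⁻ be positive constants with B⁺ ≥ max_ℝ a(x)/b(φ(x)), C⁺ ≤ min_ℝ b(x)/b(φ(x)), B⁻ ≥ max_ℝ a(x)/b(x), C⁻ ≤ min_ℝ b(φ(x))/b(x), and suppose (B⁺)² − 4C⁺ > 0 and (B⁻)² − 4C⁻ > 0. Then for every x ∈ ℝ, a(x) ≥ b(φ(x))·D⁻ + b(x)/D⁺, where D⁺ = (B⁺ + √((B⁺)² − 4C⁺))/2 and D⁻ = (B⁻ − √((B⁻)² − 4C⁻))/(2C⁻). -/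

import Mathlib

open Filter Set Topology


/-- Partial derivative of `h` with respect to its first argument. -/
noncomputable def h1 (h : ℝ → ℝ → ℝ) (x y : ℝ) : ℝ := deriv (fun u => h u y) x

/-- Partial derivative of `h` with respect to its second argument. -/
noncomputable def h2 (h : ℝ → ℝ → ℝ) (x y : ℝ) : ℝ := deriv (fun v => h x v) y

/-- Second partial derivative of `h` with respect to its first argument, twice. -/
noncomputable def h11 (h : ℝ → ℝ → ℝ) (x y : ℝ) : ℝ := deriv (fun u => h1 h u y) x

/-- Mixed second partial derivative of `h`. -/
noncomputable def h12 (h : ℝ → ℝ → ℝ) (x y : ℝ) : ℝ := deriv (fun v => h1 h x v) y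

/-- Second partial derivative of `h` with respect to its second argument, twice. -/
noncomputable def h22 (h : ℝ → ℝ → ℝ) (x y : ℝ) : ℝ := deriv (fun v => h2 h x v) y


private lemma quad_up {B C s : ℝ} (hs : 0 < s) (h : s^2 - B*s + C ≤ 0) :
    s ≤ (B + Real.sqrt (B^2 - 4*C))/2 := by
  have h1 : 2*s - B ≤ Real.sqrt (B^2 - 4*C) := by
    rcases le_or_gt (2*s - B) 0 with h'|h'
    · exact h'.trans (Real.sqrt_nonneg _)
    · have hsq : (2*s-B)^2 ≤ B^2-4*C := by nlinarith
      calc 2*s-B = Real.sqrt ((2*s-B)^2) := (Real.sqrt_sq h'.le).symm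
        _ ≤ _ := Real.sqrt_le_sqrt hsq
  linarith

private lemma quad_down {B C i : ℝ} (hC : 0 < C) (h : C*i^2 - B*i + 1 ≤ 0) :
    (B - Real.sqrt (B^2 - 4*C))/(2*C) ≤ i := by
  have h1 : B - 2*C*i ≤ Real.sqrt (B^2 - 4*C) := by
    rcases le_or_gt (B - 2*C*i) 0 with h'|h'
    · exact h'.trans (Real.sqrt_nonneg _)
    · have hsq : (B-2*C*i)^2 ≤ B^2-4*C := by nlinarith
      calc B-2*C*i = Real.sqrt ((B-2*C*i)^2) := (Real.sqrt_sq h'.le).symm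
        _ ≤ _ := Real.sqrt_le_sqrt hsq
  rw [div_le_iff₀ (by linarith : (0:ℝ) < 2*C)]
  linarith


set_option maxHeartbeats 2000000 in
/-- the improved necessary condition for invariant curves: with the
constants `B⁺, C⁺, B⁻, C⁻` bounding `a/b∘φ`, `b/b∘φ`, `a/b`, `b∘φ/b` and whose
discriminants are positive, for every `x`,
`a(x) ≥ b(φ(x))·D⁻ + b(x)/D⁺` where `D⁺ = (B⁺+√((B⁺)²−4C⁺))/2` and
`D⁻ = (B⁻−√((B⁻)²−4C⁻))/(2C⁻)`. -/
theorem improved_necessary_condition (h : ℝ → ℝ → ℝ)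
    (hC2 : ContDiff ℝ 2 (fun p : ℝ × ℝ => h p.1 p.2))
    (hper : ∀ x y, h (x + 1) (y + 1) = h x y)
    (htwist : ∀ x y, h12 h x y < 0)
    (φ ψ : ℝ → ℝ) (hmono : StrictMono φ) (K : NNReal)
    (hlip : LipschitzWith K φ) (halip : AntilipschitzWith K φ)
    (hlinv : Function.LeftInverse ψ φ) (hrinv : Function.RightInverse ψ φ)
    (hcomm : ∀ x, φ (x + 1) = φ x + 1)
    (hEL : ∀ x, h2 h (ψ x) x + h1 h x (φ x) = 0)
    (a b : ℝ → ℝ)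
    (ha : ∀ x, a x = h22 h (ψ x) x + h11 h x (φ x))
    (hb : ∀ x, b x = -h12 h (ψ x) x)
    (Bp Cp Bm Cm : ℝ)
    (hBp0 : 0 < Bp) (hCp0 : 0 < Cp) (hBm0 : 0 < Bm) (hCm0 : 0 < Cm)
    (hBp : ∀ x, a x / b (φ x) ≤ Bp) (hCp : ∀ x, Cp ≤ b x / b (φ x))
    (hBm : ∀ x, a x / b x ≤ Bm) (hCm : ∀ x, Cm ≤ b (φ x) / b x)
    (hdiscp : Bp ^ 2 - 4 * Cp > 0) (hdiscm : Bm ^ 2 - 4 * Cm > 0) :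
    ∀ x : ℝ,
      b (φ x) * ((Bm - Real.sqrt (Bm ^ 2 - 4 * Cm)) / (2 * Cm))
        + b x / ((Bp + Real.sqrt (Bp ^ 2 - 4 * Cp)) / 2) ≤ a x := by
    -- ## Calculus infrastructure
  set f : ℝ × ℝ → ℝ := fun p : ℝ × ℝ => h p.1 p.2 with hf_def
  set F := fderiv ℝ f with hF_def
  set G := fderiv ℝ F with hG_def
  have hfd : Differentiable ℝ f := hC2.differentiable (by norm_num)
  have h2' : ContDiff ℝ (1+1) f := by exact_mod_cast hC2
  have hF : ContDiff ℝ 1 F := (contDiff_succ_iff_fderiv.mp h2').2.2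
  have hFd : Differentiable ℝ F := hF.differentiable one_ne_zero
  have hFc : Continuous F := hF.continuous
  have hGc : Continuous G := hF.continuous_fderiv one_ne_zero
  have hsymm : ∀ p v w, G p v w = G p w v :=
    fun p v w => second_derivative_symmetric (fun q => (hfd q).hasFDerivAt)
      ((hFd p).hasFDerivAt) v w
  have curve1 : ∀ x y : ℝ, HasDerivAt (fun u : ℝ => (u, y)) ((1:ℝ),(0:ℝ)) x :=
    fun x y => (hasDerivAt_id x).prodMk (hasDerivAt_const x y)
  have curve2 : ∀ x y : ℝ, HasDerivAt (fun v : ℝ => (x, v)) ((0:ℝ),(1:ℝ)) y :=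
    fun x y => (hasDerivAt_const y x).prodMk (hasDerivAt_id y)
  have hD1 : ∀ x y : ℝ, HasDerivAt (fun u => h u y) (F (x,y) (1,0)) x :=
    fun x y => ((hfd (x,y)).hasFDerivAt.comp_hasDerivAt x (curve1 x y) : )
  have hD2 : ∀ x y : ℝ, HasDerivAt (fun v => h x v) (F (x,y) (0,1)) y :=
    fun x y => ((hfd (x,y)).hasFDerivAt.comp_hasDerivAt y (curve2 x y) : )
  have h1_eq : ∀ x y : ℝ, h1 h x y = F (x,y) (1,0) := fun x y => (hD1 x y).deriv
  have h2_eq : ∀ x y : ℝ, h2 h x y = F (x,y) (0,1) := fun x y => (hD2 x y).deriv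
  have hD11 : ∀ x y : ℝ, HasDerivAt (fun u => F (u,y) (1,0)) (G (x,y) (1,0) (1,0)) x := by
    intro x y
    have hc : HasDerivAt (fun u : ℝ => F (u, y)) (G (x,y) (1,0)) x :=
      ((hFd (x,y)).hasFDerivAt.comp_hasDerivAt x (curve1 x y) : )
    simpa using hc.clm_apply (hasDerivAt_const x ((1:ℝ),(0:ℝ)))
  have hD12 : ∀ x y : ℝ, HasDerivAt (fun v => F (x,v) (1,0)) (G (x,y) (0,1) (1,0)) y := by
    intro x y
    have hc : HasDerivAt (fun v : ℝ => F (x, v)) (G (x,y) (0,1)) y :=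
      ((hFd (x,y)).hasFDerivAt.comp_hasDerivAt y (curve2 x y) : )
    simpa using hc.clm_apply (hasDerivAt_const y ((1:ℝ),(0:ℝ)))
  have hD21 : ∀ x y : ℝ, HasDerivAt (fun u => F (u,y) (0,1)) (G (x,y) (1,0) (0,1)) x := by
    intro x y
    have hc : HasDerivAt (fun u : ℝ => F (u, y)) (G (x,y) (1,0)) x :=
      ((hFd (x,y)).hasFDerivAt.comp_hasDerivAt x (curve1 x y) : )
    simpa using hc.clm_apply (hasDerivAt_const x ((0:ℝ),(1:ℝ)))
  have hD22 : ∀ x y : ℝ, HasDerivAt (fun v => F (x,v) (0,1)) (G (x,y) (0,1) (0,1)) y := by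
    intro x y
    have hc : HasDerivAt (fun v : ℝ => F (x, v)) (G (x,y) (0,1)) y :=
      ((hFd (x,y)).hasFDerivAt.comp_hasDerivAt y (curve2 x y) : )
    simpa using hc.clm_apply (hasDerivAt_const y ((0:ℝ),(1:ℝ)))
  have h11_eq : ∀ x y : ℝ, h11 h x y = G (x,y) (1,0) (1,0) := by
    intro x y
    have he : (fun u => h1 h u y) = fun u => F (u,y) (1,0) := funext fun u => h1_eq u y
    rw [h11, he]; exact (hD11 x y).deriv
  have h12_eq : ∀ x y : ℝ, h12 h x y = G (x,y) (0,1) (1,0) := by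
    intro x y
    have he : (fun v => h1 h x v) = fun v => F (x,v) (1,0) := funext fun v => h1_eq x v
    rw [h12, he]; exact (hD12 x y).deriv
  have h22_eq : ∀ x y : ℝ, h22 h x y = G (x,y) (0,1) (0,1) := by
    intro x y
    have he : (fun v => h2 h x v) = fun v => F (x,v) (0,1) := funext fun v => h2_eq x v
    rw [h22, he]; exact (hD22 x y).deriv
  -- ## basic facts about `a`, `b`, `φ`, `ψ`
  have bpos : ∀ x, 0 < b x := fun x => by
    rw [hb x]; linarith [htwist (ψ x) x]
  have aeq : ∀ x, a x = G (ψ x, x) (0,1) (0,1) + G (x, φ x) (1,0) (1,0) := fun x => by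
    rw [ha x, h22_eq, h11_eq]
  have beq1 : ∀ x, b x = -G (ψ x, x) (0,1) (1,0) := fun x => by
    rw [hb x, h12_eq]
  have beq2 : ∀ x, b (φ x) = -G (x, φ x) (0,1) (1,0) := fun x => by
    rw [hb (φ x), h12_eq, hlinv x]
  have hψlip : LipschitzWith K ψ := halip.to_rightInverse hrinv
  have hψmono : StrictMono ψ := fun u v huv =>
    hmono.lt_iff_lt.mp (by rw [hrinv u, hrinv v]; exact huv)
  have K1 : (1:ℝ) ≤ (K:ℝ) := by
    have hd := hlip.dist_le_mul 1 0
    have h10 : φ 1 = φ 0 + 1 := by simpa using hcomm 0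
    rw [h10] at hd
    simp [Real.dist_eq] at hd
    exact hd
  have Kpos : (0:ℝ) < (K:ℝ) := lt_of_lt_of_le one_pos K1
  have Kinvpos : (0:ℝ) < (K:ℝ)⁻¹ := inv_pos.mpr Kpos
  -- ## difference quotients
  set Q : ℝ → ℝ → ℝ := fun u v => (φ v - φ u)/(v - u) with hQ_def
  have hQpos : ∀ u v, u < v → 0 < Q u v := fun u v huv =>
    div_pos (sub_pos.mpr (hmono huv)) (sub_pos.mpr huv)
  have hQub : ∀ u v, u < v → Q u v ≤ (K:ℝ) := by
    intro u v huv
    have hd := hlip.dist_le_mul v u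
    rw [Real.dist_eq, Real.dist_eq, abs_of_pos (sub_pos.mpr (hmono huv)),
      abs_of_pos (sub_pos.mpr huv)] at hd
    rw [hQ_def]
    rw [div_le_iff₀ (sub_pos.mpr huv)]
    exact hd
  have hQlb : ∀ u v, u < v → (K:ℝ)⁻¹ ≤ Q u v := by
    intro u v huv
    have hd := halip.le_mul_dist v u
    rw [Real.dist_eq, Real.dist_eq, abs_of_pos (sub_pos.mpr (hmono huv)),
      abs_of_pos (sub_pos.mpr huv)] at hd
    rw [hQ_def]
    rw [le_div_iff₀ (sub_pos.mpr huv), inv_mul_le_iff₀ Kpos]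
    exact hd
  have hQinv : ∀ u v, u < v → (Q (ψ u) (ψ v))⁻¹ = (ψ v - ψ u)/(v - u) := by
    intro u v huv
    have he : Q (ψ u) (ψ v) = (v - u)/(ψ v - ψ u) := by
      simp only [hQ_def, hrinv u, hrinv v]
    rw [he, inv_div]
  -- limsup / liminf of difference quotients
  set P : ℝ → ℝ := fun u => limsup (Q u) (𝓝[>] u) with hP_def
  set p : ℝ → ℝ := fun u => liminf (Q u) (𝓝[>] u) with hp_def
  have hevIoi : ∀ u : ℝ, ∀ᶠ v in 𝓝[>] u, u < v := fun u => eventually_mem_nhdsWithin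
  have hevub : ∀ u : ℝ, ∀ᶠ v in 𝓝[>] u, Q u v ≤ (K:ℝ) := fun u =>
    (hevIoi u).mono fun v hv => hQub u v hv
  have hevlb : ∀ u : ℝ, ∀ᶠ v in 𝓝[>] u, (K:ℝ)⁻¹ ≤ Q u v := fun u =>
    (hevIoi u).mono fun v hv => hQlb u v hv
  have hbdd_le : ∀ u : ℝ, IsBoundedUnder (· ≤ ·) (𝓝[>] u) (Q u) := fun u => ⟨(K:ℝ), hevub u⟩
  have hbdd_ge : ∀ u : ℝ, IsBoundedUnder (· ≥ ·) (𝓝[>] u) (Q u) := fun u => ⟨(K:ℝ)⁻¹, hevlb u⟩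
  have hcob_le : ∀ u : ℝ, IsCoboundedUnder (· ≤ ·) (𝓝[>] u) (Q u) := fun u =>
    (hbdd_ge u).isCoboundedUnder_le
  have hcob_ge : ∀ u : ℝ, IsCoboundedUnder (· ≥ ·) (𝓝[>] u) (Q u) := fun u =>
    (hbdd_le u).isCoboundedUnder_ge
  have hPub : ∀ u, P u ≤ (K:ℝ) := fun u => limsup_le_of_le (hcob_le u) (hevub u)
  have hplb : ∀ u, (K:ℝ)⁻¹ ≤ p u := fun u => le_liminf_of_le (hcob_ge u) (hevlb u)
  have hpleP : ∀ u, p u ≤ P u := fun u => liminf_le_limsup (hbdd_le u) (hbdd_ge u)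
  have hppos : ∀ u, 0 < p u := fun u => lt_of_lt_of_le Kinvpos (hplb u)
  have hPpos : ∀ u, 0 < P u := fun u => lt_of_lt_of_le (hppos u) (hpleP u)
  have hPlb : ∀ u, (K:ℝ)⁻¹ ≤ P u := fun u => (hplb u).trans (hpleP u)
  -- tendsto of φ, ψ on right-neighborhood filters
  have tψ : ∀ x : ℝ, Tendsto ψ (𝓝[>] x) (𝓝[>] (ψ x)) := by
    intro x
    rw [tendsto_nhdsWithin_iff]
    constructor
    · exact (hψlip.continuous.tendsto x).mono_left nhdsWithin_le_nhds
    · exact (hevIoi x).mono fun y hy => hψmono hy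
  have tφ : ∀ u : ℝ, Tendsto φ (𝓝[>] u) (𝓝[>] (φ u)) := by
    intro u
    rw [tendsto_nhdsWithin_iff]
    constructor
    · exact (hlip.continuous.tendsto u).mono_left nhdsWithin_le_nhds
    · exact (hevIoi u).mono fun y hy => hmono hy
  -- ## the mean value identity
  have ELF : ∀ z : ℝ, F (ψ z, z) (0,1) + F (z, φ z) (1,0) = 0 := by
    intro z
    rw [← h2_eq, ← h1_eq]; exact hEL z
  have key : ∀ x y : ℝ, x < y →
      ∃ ξ₁ ∈ Ioo (ψ x) (ψ y), ∃ ξ₂ ∈ Ioo x y, ∃ ξ₃ ∈ Ioo (φ x) (φ y), ∃ ξ₄ ∈ Ioo x y,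
        G (ξ₁, y) (0,1) (1,0) * (ψ y - ψ x) + G (ψ x, ξ₂) (0,1) (0,1) * (y - x)
          + G (y, ξ₃) (0,1) (1,0) * (φ y - φ x) + G (ξ₄, φ x) (1,0) (1,0) * (y - x) = 0 := by
    intro x y hxy
    have hψxy := hψmono hxy
    have hφxy := hmono hxy
    obtain ⟨ξ₁, hξ₁, e₁⟩ := exists_hasDerivAt_eq_slope (fun A => F (A, y) (0,1))
      (fun A => G (A, y) (1,0) (0,1)) hψxy
      (fun A _ => (hD21 A y).continuousAt.continuousWithinAt) (fun A _ => hD21 A y)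
    obtain ⟨ξ₂, hξ₂, e₂⟩ := exists_hasDerivAt_eq_slope (fun B => F (ψ x, B) (0,1))
      (fun B => G (ψ x, B) (0,1) (0,1)) hxy
      (fun B _ => (hD22 (ψ x) B).continuousAt.continuousWithinAt) (fun B _ => hD22 (ψ x) B)
    obtain ⟨ξ₃, hξ₃, e₃⟩ := exists_hasDerivAt_eq_slope (fun B => F (y, B) (1,0))
      (fun B => G (y, B) (0,1) (1,0)) hφxy
      (fun B _ => (hD12 y B).continuousAt.continuousWithinAt) (fun B _ => hD12 y B)
    obtain ⟨ξ₄, hξ₄, e₄⟩ := exists_hasDerivAt_eq_slope (fun A => F (A, φ x) (1,0))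
      (fun A => G (A, φ x) (1,0) (1,0)) hxy
      (fun A _ => (hD11 A (φ x)).continuousAt.continuousWithinAt) (fun A _ => hD11 A (φ x))
    have E1 : G (ξ₁, y) (1,0) (0,1) * (ψ y - ψ x) = F (ψ y, y) (0,1) - F (ψ x, y) (0,1) := by
      rw [e₁]; exact div_mul_cancel₀ _ (sub_ne_zero.mpr hψxy.ne')
    have E2 : G (ψ x, ξ₂) (0,1) (0,1) * (y - x) = F (ψ x, y) (0,1) - F (ψ x, x) (0,1) := by
      rw [e₂]; exact div_mul_cancel₀ _ (sub_ne_zero.mpr hxy.ne')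
    have E3 : G (y, ξ₃) (0,1) (1,0) * (φ y - φ x) = F (y, φ y) (1,0) - F (y, φ x) (1,0) := by
      rw [e₃]; exact div_mul_cancel₀ _ (sub_ne_zero.mpr hφxy.ne')
    have E4 : G (ξ₄, φ x) (1,0) (1,0) * (y - x) = F (y, φ x) (1,0) - F (x, φ x) (1,0) := by
      rw [e₄]; exact div_mul_cancel₀ _ (sub_ne_zero.mpr hxy.ne')
    refine ⟨ξ₁, hξ₁, ξ₂, hξ₂, ξ₃, hξ₃, ξ₄, hξ₄, ?_⟩
    rw [hsymm (ξ₁, y) (0,1) (1,0)]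
    linarith [ELF x, ELF y, E1, E2, E3, E4]
  -- ## main eventual identity with coefficients close to a, b
  have main : ∀ x : ℝ, ∀ ε : ℝ, 0 < ε → ∀ᶠ y in 𝓝[>] x, ∃ e c₁ c₂ : ℝ,
      |e - a x| < ε ∧ |c₁ - b x| < ε ∧ |c₂ - b (φ x)| < ε ∧
      c₁ * (Q (ψ x) (ψ y))⁻¹ + c₂ * Q x y = e := by
    intro x ε hε
    have contT : Continuous (fun pq : ℝ × ℝ => G pq (0,1) (1,0)) :=
      (hGc.clm_apply continuous_const).clm_apply continuous_const
    have contE1 : Continuous (fun pq : ℝ × ℝ => G pq (0,1) (0,1)) :=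
      (hGc.clm_apply continuous_const).clm_apply continuous_const
    have contE2 : Continuous (fun pq : ℝ × ℝ => G pq (1,0) (1,0)) :=
      (hGc.clm_apply continuous_const).clm_apply continuous_const
    obtain ⟨δ₁, hδ₁0, hδ₁⟩ := Metric.continuousAt_iff.mp (contT.continuousAt (x := (ψ x, x))) ε hε
    obtain ⟨δ₂, hδ₂0, hδ₂⟩ := Metric.continuousAt_iff.mp (contT.continuousAt (x := (x, φ x))) ε hε
    obtain ⟨δ₃, hδ₃0, hδ₃⟩ :=
      Metric.continuousAt_iff.mp (contE1.continuousAt (x := (ψ x, x))) (ε/2) (half_pos hε)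
    obtain ⟨δ₄, hδ₄0, hδ₄⟩ :=
      Metric.continuousAt_iff.mp (contE2.continuousAt (x := (x, φ x))) (ε/2) (half_pos hε)
    set δ := min (min δ₁ δ₂) (min δ₃ δ₄) with hδ_def
    have hδ0 : 0 < δ := lt_min (lt_min hδ₁0 hδ₂0) (lt_min hδ₃0 hδ₄0)
    have hδa : δ ≤ δ₁ := le_trans (min_le_left _ _) (min_le_left _ _)
    have hδb : δ ≤ δ₂ := le_trans (min_le_left _ _) (min_le_right _ _)
    have hδc : δ ≤ δ₃ := le_trans (min_le_right _ _) (min_le_left _ _)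
    have hδd : δ ≤ δ₄ := le_trans (min_le_right _ _) (min_le_right _ _)
    have hδ'0 : 0 < δ / ((K:ℝ) + 1) := div_pos hδ0 (by linarith)
    filter_upwards [Ioo_mem_nhdsGT (lt_add_of_pos_right x hδ'0)] with y hy
    obtain ⟨hxy, hyδ⟩ := hy
    have hyx : y - x < δ / ((K:ℝ) + 1) := by linarith
    have hK1 : (0:ℝ) < (K:ℝ) + 1 := by linarith
    have hKyx : ((K:ℝ) + 1) * (y - x) < δ := by
      rw [lt_div_iff₀ hK1] at hyx; linarith [hyx]
    have hyxpos : 0 < y - x := sub_pos.mpr hxy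
    have hKd : (K:ℝ) * (y - x) < δ := by nlinarith [hKyx, hyxpos]
    have hyxδ : y - x < δ := by nlinarith [hKyx, hyxpos, K1]
    have hψd : ψ y - ψ x ≤ (K:ℝ) * (y - x) := by
      have hd := hψlip.dist_le_mul y x
      rw [Real.dist_eq, Real.dist_eq, abs_of_pos (sub_pos.mpr (hψmono hxy)),
        abs_of_pos hyxpos] at hd
      exact hd
    have hφd : φ y - φ x ≤ (K:ℝ) * (y - x) := by
      have hd := hlip.dist_le_mul y x
      rw [Real.dist_eq, Real.dist_eq, abs_of_pos (sub_pos.mpr (hmono hxy)),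
        abs_of_pos hyxpos] at hd
      exact hd
    obtain ⟨ξ₁, hξ₁, ξ₂, hξ₂, ξ₃, hξ₃, ξ₄, hξ₄, hid⟩ := key x y hxy
    refine ⟨G (ψ x, ξ₂) (0,1) (0,1) + G (ξ₄, φ x) (1,0) (1,0),
      -G (ξ₁, y) (0,1) (1,0), -G (y, ξ₃) (0,1) (1,0), ?_, ?_, ?_, ?_⟩
    · -- |e - a x| < ε
      have hd3 : dist ((ψ x, ξ₂) : ℝ × ℝ) (ψ x, x) < δ₃ := by
        rw [Prod.dist_eq]
        apply max_lt
        · simpa [Real.dist_eq] using hδ₃0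
        · rw [Real.dist_eq]
          rw [abs_lt]
          constructor <;> [linarith [hξ₂.1]; linarith [hξ₂.2]]
      have hd4 : dist ((ξ₄, φ x) : ℝ × ℝ) (x, φ x) < δ₄ := by
        rw [Prod.dist_eq]
        apply max_lt
        · rw [Real.dist_eq, abs_lt]
          constructor <;> [linarith [hξ₄.1]; linarith [hξ₄.2]]
        · simpa [Real.dist_eq] using hδ₄0
      have h3 := hδ₃ hd3
      have h4 := hδ₄ hd4
      rw [Real.dist_eq] at h3 h4
      rw [aeq x]
      have habs := abs_add_le (G (ψ x, ξ₂) (0,1) (0,1) - G (ψ x, x) (0,1) (0,1))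
        (G (ξ₄, φ x) (1,0) (1,0) - G (x, φ x) (1,0) (1,0))
      calc |G (ψ x, ξ₂) (0,1) (0,1) + G (ξ₄, φ x) (1,0) (1,0) -
          (G (ψ x, x) (0,1) (0,1) + G (x, φ x) (1,0) (1,0))|
          = |(G (ψ x, ξ₂) (0,1) (0,1) - G (ψ x, x) (0,1) (0,1)) +
            (G (ξ₄, φ x) (1,0) (1,0) - G (x, φ x) (1,0) (1,0))| := by ring_nf
        _ ≤ _ := habs
        _ < ε/2 + ε/2 := by exact add_lt_add h3 h4
        _ = ε := by ring
    · -- |c₁ - b x| < ε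
      have hd1 : dist ((ξ₁, y) : ℝ × ℝ) (ψ x, x) < δ₁ := by
        rw [Prod.dist_eq]
        apply max_lt
        · rw [Real.dist_eq, abs_lt]
          constructor <;> linarith [hψd, hKd, hδa, hξ₁.1, hξ₁.2]
        · rw [Real.dist_eq, abs_lt]
          constructor <;> linarith [hyxδ, hδa]
      have h1 := hδ₁ hd1
      rw [Real.dist_eq] at h1
      rw [beq1 x]
      rw [show -G (ξ₁, y) (0,1) (1,0) - -G (ψ x, x) (0,1) (1,0)
        = -(G (ξ₁, y) (0,1) (1,0) - G (ψ x, x) (0,1) (1,0)) by ring, abs_neg]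
      exact h1
    · -- |c₂ - b (φ x)| < ε
      have hd2 : dist ((y, ξ₃) : ℝ × ℝ) (x, φ x) < δ₂ := by
        rw [Prod.dist_eq]
        apply max_lt
        · rw [Real.dist_eq, abs_lt]
          constructor <;> linarith [hyxδ, hδb]
        · rw [Real.dist_eq, abs_lt]
          constructor <;> linarith [hφd, hKd, hδb, hξ₃.1, hξ₃.2]
      have h2 := hδ₂ hd2
      rw [Real.dist_eq] at h2
      rw [beq2 x]
      rw [show -G (y, ξ₃) (0,1) (1,0) - -G (x, φ x) (0,1) (1,0)
        = -(G (y, ξ₃) (0,1) (1,0) - G (x, φ x) (0,1) (1,0)) by ring, abs_neg]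
      exact h2
    · -- the identity
      rw [hQinv x y hxy]
      have hQxy : Q x y = (φ y - φ x)/(y - x) := by simp only [hQ_def]
      rw [hQxy]
      have hne : y - x ≠ 0 := ne_of_gt hyxpos
      rw [← mul_div_assoc, ← mul_div_assoc, ← add_div, div_eq_iff hne]
      linarith [hid]
  have hPu : ∀ u, P u = limsup (Q u) (𝓝[>] u) := fun u => by rw [hP_def]
  have hpu : ∀ u, p u = liminf (Q u) (𝓝[>] u) := fun u => by rw [hp_def]
  -- ## Recursion inequality R1
  have R1 : ∀ x : ℝ, b (φ x) * P x + b x / P (ψ x) ≤ a x := by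
    intro x
    have hbφ := bpos (φ x)
    have hbx := bpos x
    have hPψ := hPpos (ψ x)
    have hgε : ∀ ε : ℝ, 0 < ε → ε < b x → ε < b (φ x) →
        P x ≤ ((a x + ε) - (b x - ε)/(P (ψ x) + ε))/(b (φ x) - ε) := by
      intro ε hε hεb hεbφ
      apply limsup_le_of_le (hcob_le x)
      have evψ : ∀ᶠ y in 𝓝[>] x, Q (ψ x) (ψ y) < P (ψ x) + ε := by
        have h' : ∀ᶠ z in 𝓝[>] (ψ x), Q (ψ x) z < P (ψ x) + ε := by
          apply eventually_lt_of_limsup_lt _ (hbdd_le (ψ x))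
          rw [← hPu]; linarith
        exact (tψ x).eventually h'
      filter_upwards [main x ε hε, evψ, hevIoi x] with y hy1 hQψub hxy
      obtain ⟨e, c₁, c₂, he, hc₁, hc₂, hiden⟩ := hy1
      have hQψpos : 0 < Q (ψ x) (ψ y) := hQpos _ _ (hψmono hxy)
      have hQpos' : 0 < Q x y := hQpos _ _ hxy
      obtain ⟨he1, he2⟩ := abs_lt.mp he
      obtain ⟨hc11, hc12⟩ := abs_lt.mp hc₁
      obtain ⟨hc21, hc22⟩ := abs_lt.mp hc₂
      have h0 : 0 < P (ψ x) + ε := by linarith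
      have ht1 : (b x - ε) / (P (ψ x) + ε) ≤ c₁ * (Q (ψ x) (ψ y))⁻¹ := by
        rw [← div_eq_mul_inv]
        exact div_le_div₀ (by linarith) (by linarith) hQψpos (by linarith)
      have ht2 : c₂ * Q x y ≤ (a x + ε) - (b x - ε)/(P (ψ x) + ε) := by linarith
      rw [le_div_iff₀ (by linarith : (0:ℝ) < b (φ x) - ε)]
      have h5 : Q x y * (b (φ x) - ε) ≤ Q x y * c₂ :=
        mul_le_mul_of_nonneg_left (by linarith) hQpos'.le
      have h6 : Q x y * c₂ = c₂ * Q x y := mul_comm _ _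
      linarith
    have hL : P x ≤ ((a x) - b x/(P (ψ x)))/(b (φ x)) := by
      have hcont : Tendsto (fun ε : ℝ => ((a x + ε) - (b x - ε)/(P (ψ x) + ε))/(b (φ x) - ε))
          (𝓝[>] (0:ℝ)) (𝓝 (((a x) - (b x)/(P (ψ x)))/(b (φ x)))) := by
        have hc : ContinuousAt (fun ε : ℝ => ((a x + ε) - (b x - ε)/(P (ψ x) + ε))/(b (φ x) - ε))
            0 := by
          apply ContinuousAt.div
          · apply ContinuousAt.sub
            · exact continuousAt_const.add continuousAt_id
            · apply ContinuousAt.div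
              · exact continuousAt_const.sub continuousAt_id
              · exact continuousAt_const.add continuousAt_id
              · simpa using hPψ.ne'
          · exact continuousAt_const.sub continuousAt_id
          · simpa using hbφ.ne'
        have := Filter.Tendsto.mono_left hc (nhdsWithin_le_nhds (s := Set.Ioi (0:ℝ)))
        simpa using this
      apply ge_of_tendsto hcont
      have hm : (0:ℝ) < min (b x) (b (φ x)) := lt_min hbx hbφ
      filter_upwards [Ioo_mem_nhdsGT (lt_add_of_pos_right (0:ℝ) hm)] with ε hε
      have hε0 : 0 < ε := by simpa using hε.1
      have hεlt : ε < min (b x) (b (φ x)) := by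
        have := hε.2; simpa using this
      exact hgε ε hε0 (lt_of_lt_of_le hεlt (min_le_left _ _))
        (lt_of_lt_of_le hεlt (min_le_right _ _))
    have hmul : b (φ x) * (((a x) - b x/(P (ψ x)))/(b (φ x))) = a x - b x / P (ψ x) := by
      field_simp
    have := mul_le_mul_of_nonneg_left hL hbφ.le
    rw [hmul] at this
    linarith
  -- ## Recursion inequality R2
  have R2 : ∀ x : ℝ, b x ≤ p (ψ x) * (a x - b (φ x) * p x) := by
    intro x
    have hbφ := bpos (φ x)
    have hbx := bpos x
    have hpψ := hppos (ψ x)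
    have hpx := hppos x
    have hgε : ∀ ε : ℝ, 0 < ε → ε < b x → ε < b (φ x) → ε < p x →
        b x - ε ≤ p (ψ x) * ((a x + ε) - (b (φ x) - ε)*(p x - ε)) := by
      intro ε hε hεb hεbφ hεp
      set β := (a x + ε) - (b (φ x) - ε)*(p x - ε) with hβ_def
      have evQ : ∀ᶠ y in 𝓝[>] x, p x - ε < Q x y := by
        apply eventually_lt_of_lt_liminf _ (hbdd_ge x)
        rw [← hpu]; linarith
      have hev : ∀ᶠ y in 𝓝[>] x, b x - ε ≤ β * Q (ψ x) (ψ y) ∧ 0 < β := by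
        filter_upwards [main x ε hε, evQ, hevIoi x] with y hy1 hQlb' hxy
        obtain ⟨e, c₁, c₂, he, hc₁, hc₂, hiden⟩ := hy1
        have hQψpos : 0 < Q (ψ x) (ψ y) := hQpos _ _ (hψmono hxy)
        have hQpos' : 0 < Q x y := hQpos _ _ hxy
        obtain ⟨he1, he2⟩ := abs_lt.mp he
        obtain ⟨hc11, hc12⟩ := abs_lt.mp hc₁
        obtain ⟨hc21, hc22⟩ := abs_lt.mp hc₂
        have hprod : (b (φ x) - ε) * (p x - ε) ≤ c₂ * Q x y :=
          mul_le_mul (by linarith) (by linarith) (by linarith) (by linarith)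
        have hβge : c₁ * (Q (ψ x) (ψ y))⁻¹ ≤ β := by
          rw [hβ_def]; linarith
        have hc₁pos : 0 < c₁ := by linarith
        have hβpos : 0 < β :=
          lt_of_lt_of_le (mul_pos hc₁pos (inv_pos.mpr hQψpos)) hβge
        refine ⟨?_, hβpos⟩
        have h7 : c₁ ≤ β * Q (ψ x) (ψ y) := by
          have := mul_le_mul_of_nonneg_right hβge hQψpos.le
          rwa [mul_assoc, inv_mul_cancel₀ hQψpos.ne', mul_one] at this
        linarith
      obtain ⟨_, -, hβpos⟩ := hev.exists
      have hev2 : ∀ᶠ z in 𝓝[>] (ψ x), (b x - ε)/β ≤ Q (ψ x) z := by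
        have tφψ : Tendsto φ (𝓝[>] (ψ x)) (𝓝[>] x) := by
          have := tφ (ψ x); rwa [hrinv x] at this
        have h2 := tφψ.eventually hev
        apply h2.mono
        intro z hz
        rw [hlinv z] at hz
        rw [div_le_iff₀ hβpos]
        linarith [hz.1]
      have hple : (b x - ε)/β ≤ p (ψ x) := by
        rw [hpu]
        exact le_liminf_of_le (hcob_ge (ψ x)) hev2
      calc b x - ε = (b x - ε)/β * β := by field_simp
        _ ≤ p (ψ x) * β := mul_le_mul_of_nonneg_right hple hβpos.le
    -- limit ε → 0⁺
    have hf1 : Tendsto (fun ε : ℝ => b x - ε) (𝓝[>] (0:ℝ)) (𝓝 (b x)) := by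
      have hcc : ContinuousAt (fun ε : ℝ => b x - ε) 0 := continuousAt_const.sub continuousAt_id
      have := Filter.Tendsto.mono_left hcc (nhdsWithin_le_nhds (s := Set.Ioi (0:ℝ)))
      simpa using this
    have hf2 : Tendsto (fun ε : ℝ => p (ψ x) * ((a x + ε) - (b (φ x) - ε)*(p x - ε)))
        (𝓝[>] (0:ℝ)) (𝓝 (p (ψ x) * (a x - b (φ x) * p x))) := by
      have hc : ContinuousAt (fun ε : ℝ => p (ψ x) * ((a x + ε) - (b (φ x) - ε)*(p x - ε)))
          0 := by fun_prop
      have := Filter.Tendsto.mono_left hc (nhdsWithin_le_nhds (s := Set.Ioi (0:ℝ)))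
      simpa using this
    apply le_of_tendsto_of_tendsto hf1 hf2
    have hm : (0:ℝ) < min (b x) (min (b (φ x)) (p x)) := lt_min hbx (lt_min hbφ hpx)
    filter_upwards [Ioo_mem_nhdsGT (lt_add_of_pos_right (0:ℝ) hm)] with ε hε
    have hε0 : 0 < ε := by simpa using hε.1
    have hεlt : ε < min (b x) (min (b (φ x)) (p x)) := by
      have := hε.2; simpa using this
    exact hgε ε hε0 (lt_of_lt_of_le hεlt (min_le_left _ _))
      (lt_of_lt_of_le hεlt (le_trans (min_le_right _ _) (min_le_left _ _)))
      (lt_of_lt_of_le hεlt (le_trans (min_le_right _ _) (min_le_right _ _)))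
  have R2pos : ∀ x : ℝ, 0 < a x - b (φ x) * p x := by
    intro x
    by_contra hcon
    push_neg at hcon
    have h1 := R2 x
    have h2 : p (ψ x) * (a x - b (φ x) * p x) ≤ 0 :=
      mul_nonpos_of_nonneg_of_nonpos (hppos (ψ x)).le hcon
    linarith [bpos x]
  -- ## the supremum of P is at most D⁺
  have hbddP : BddAbove (range P) := ⟨(K:ℝ), by rintro _ ⟨u, rfl⟩; exact hPub u⟩
  set S := sSup (range P) with hS_def
  have hSub : ∀ u, P u ≤ S := fun u => le_csSup hbddP (mem_range_self u)
  have hSpos : 0 < S := lt_of_lt_of_le (hPpos 0) (hSub 0)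
  have hrecP : ∀ x : ℝ, P x ≤ Bp - Cp/S := by
    intro x
    have h1 := R1 x
    have hbφ := bpos (φ x)
    have hax : a x ≤ Bp * b (φ x) := (div_le_iff₀ hbφ).mp (hBp x)
    have hbx : Cp * b (φ x) ≤ b x := (le_div_iff₀ hbφ).mp (hCp x)
    have h2 : Cp * b (φ x) / S ≤ b x / P (ψ x) :=
      div_le_div₀ (bpos x).le hbx (hPpos (ψ x)) (hSub (ψ x))
    have h3 : b (φ x) * P x ≤ b (φ x) * (Bp - Cp/S) := by
      have he : Bp * b (φ x) - Cp * b (φ x)/S = b (φ x) * (Bp - Cp/S) := by ring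
      linarith
    exact le_of_mul_le_mul_left h3 hbφ
  have hSle : S ≤ Bp - Cp/S := csSup_le (range_nonempty P) (by rintro _ ⟨u, rfl⟩; exact hrecP u)
  have hSq : S^2 - Bp*S + Cp ≤ 0 := by
    have h' : S + Cp/S ≤ Bp := by linarith
    have e1 : (S + Cp/S)*S = S^2 + Cp := by field_simp
    nlinarith [mul_le_mul_of_nonneg_right h' hSpos.le, e1]
  have hPup : ∀ u, P u ≤ (Bp + Real.sqrt (Bp^2 - 4*Cp))/2 :=
    fun u => le_trans (hSub u) (quad_up hSpos hSq)
  -- ## the infimum of p is at least D⁻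
  have hbddp : BddBelow (range p) := ⟨(K:ℝ)⁻¹, by rintro _ ⟨u, rfl⟩; exact hplb u⟩
  set II := sInf (range p) with hI_def
  have hIlb : ∀ u, II ≤ p u := fun u => csInf_le hbddp (mem_range_self u)
  have hIpos : 0 < II :=
    lt_of_lt_of_le Kinvpos (le_csInf (range_nonempty p) (by rintro _ ⟨u, rfl⟩; exact hplb u))
  have hBmI : 0 < Bm - Cm * II := by
    have hD := R2pos (φ 0)
    have h1 : a (φ 0) ≤ Bm * b (φ 0) := (div_le_iff₀ (bpos _)).mp (hBm (φ 0))
    have h2 : Cm * b (φ 0) ≤ b (φ (φ 0)) := (le_div_iff₀ (bpos _)).mp (hCm (φ 0))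
    have h4 : Cm * b (φ 0) * II ≤ b (φ (φ 0)) * p (φ 0) :=
      mul_le_mul h2 (hIlb (φ 0)) hIpos.le (bpos _).le
    by_contra hc
    push_neg at hc
    have h5 : b (φ 0) * (Bm - Cm*II) ≤ 0 := mul_nonpos_of_nonneg_of_nonpos (bpos _).le hc
    nlinarith [bpos (φ 0)]
  have hplow : ∀ u, 1/(Bm - Cm*II) ≤ p u := by
    intro u
    have hD := R2pos (φ u)
    have hR := R2 (φ u)
    rw [hlinv u] at hR
    have h1 : a (φ u) ≤ Bm * b (φ u) := (div_le_iff₀ (bpos _)).mp (hBm (φ u))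
    have h2 : Cm * b (φ u) ≤ b (φ (φ u)) := (le_div_iff₀ (bpos _)).mp (hCm (φ u))
    have h4 : Cm * b (φ u) * II ≤ b (φ (φ u)) * p (φ u) :=
      mul_le_mul h2 (hIlb (φ u)) hIpos.le (bpos _).le
    have h5 : a (φ u) - b (φ (φ u)) * p (φ u) ≤ b (φ u) * (Bm - Cm*II) := by
      have he : Bm * b (φ u) - Cm * b (φ u) * II = b (φ u) * (Bm - Cm*II) := by ring
      linarith
    have h6 : b (φ u) ≤ p u * (b (φ u) * (Bm - Cm*II)) :=
      le_trans hR (mul_le_mul_of_nonneg_left h5 (hppos u).le)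
    rw [div_le_iff₀ hBmI]
    have h7 : b (φ u) * 1 ≤ b (φ u) * (p u * (Bm - Cm*II)) := by
      have he : p u * (b (φ u) * (Bm - Cm*II)) = b (φ u) * (p u * (Bm - Cm*II)) := by ring
      linarith
    exact le_of_mul_le_mul_left h7 (bpos (φ u))
  have hIge : 1/(Bm - Cm*II) ≤ II :=
    le_csInf (range_nonempty p) (by rintro _ ⟨u, rfl⟩; exact hplow u)
  have hIq : Cm*II^2 - Bm*II + 1 ≤ 0 := by
    have h' := (div_le_iff₀ hBmI).mp hIge
    nlinarith [h']
  have hplow2 : ∀ u, (Bm - Real.sqrt (Bm^2 - 4*Cm))/(2*Cm) ≤ p u :=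
    fun u => le_trans (quad_down hCm0 hIq) (hIlb u)
  -- ## conclusion
  intro x
  have hR1 := R1 x
  have h1 : (Bm - Real.sqrt (Bm^2 - 4*Cm))/(2*Cm) ≤ P x := le_trans (hplow2 x) (hpleP x)
  have h2 : b (φ x) * ((Bm - Real.sqrt (Bm^2 - 4*Cm))/(2*Cm)) ≤ b (φ x) * P x :=
    mul_le_mul_of_nonneg_left h1 (bpos _).le
  have hDp_pos : 0 < (Bp + Real.sqrt (Bp^2 - 4*Cp))/2 :=
    div_pos (by linarith [Real.sqrt_nonneg (Bp^2 - 4*Cp)]) two_pos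
  have h3 : b x / ((Bp + Real.sqrt (Bp^2 - 4*Cp))/2) ≤ b x / P (ψ x) :=
    div_le_div_of_nonneg_left (bpos x).le (hPpos (ψ x)) (hPup (ψ x))
  calc b (φ x) * ((Bm - Real.sqrt (Bm ^ 2 - 4 * Cm)) / (2 * Cm))
      + b x / ((Bp + Real.sqrt (Bp ^ 2 - 4 * Cp)) / 2)
      ≤ b (φ x) * P x + b x / P (ψ x) := by
        have e1 : Bm ^ 2 - 4 * Cm = Bm^2 - 4*Cm := by ring
        have e2 : Bp ^ 2 - 4 * Cp = Bp^2 - 4*Cp := by ring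
        rw [e1, e2]
        exact add_le_add h2 h3
    _ ≤ a x := hR1
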